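/- Let D_L, D_R, D̃_L, D̃_R be the ℚ-linear operators on R = (ℚ[t,t⁻¹])[[x]] determined on monomials by D_L(t^j x^m) = 4(1+j+m)(2−3j+m)·t^{j+1}x^{m+1}, D_R(t^j x^m) = (3j+m)(−2+3j+m)·t^j x^m, D̃_L(t^j x^m) = 4(1−j+m)(3j+m)·t^j x^{m+1}, D̃_R(t^j x^m) = (2−3j+m)(−3j+m)·t^{j+1} x^m (extended coefficientwise, each coefficient of the image being a finite sum). Then any two elements F, G ∈ R satisfying D_L F = D_R F, D̃_L F = D̃_R F, D_L G = D_R G, D̃_L G = D̃_R G and F ≡ G ≡ 1 + tx (mod x²) are equal; i.e. the two partial differential equations D_L F = D_R F and D̃_L F = D̃_R F have at most one common solution F ∈ R with F ≡ 1+tx (mod x²). -/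

import Mathlib

open LaurentPolynomial PowerSeries

/-- The operator `D_L` on `(ℚ[t,t⁻¹])[[x]]`, determined coefficientwise by
`D_L(t^j x^m) = 4(1+j+m)(2−3j+m)·t^{j+1} x^{m+1}`. -/
noncomputable def DL (F : (ℚ[T;T⁻¹])⟦X⟧) : (ℚ[T;T⁻¹])⟦X⟧ :=
  PowerSeries.mk fun m => match m with
    | 0 => 0
    | m + 1 => (PowerSeries.coeff (R := ℚ[T;T⁻¹]) m F).coeff.sum fun j a =>
        LaurentPolynomial.C (4 * (1 + (j : ℚ) + (m : ℚ)) * (2 - 3 * (j : ℚ) + (m : ℚ)) * a)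
          * T (j + 1)

/-- The operator `D_R` on `(ℚ[t,t⁻¹])[[x]]`, determined coefficientwise by
`D_R(t^j x^m) = (3j+m)(−2+3j+m)·t^j x^m`. -/
noncomputable def DR (F : (ℚ[T;T⁻¹])⟦X⟧) : (ℚ[T;T⁻¹])⟦X⟧ :=
  PowerSeries.mk fun m => (PowerSeries.coeff (R := ℚ[T;T⁻¹]) m F).coeff.sum fun j a =>
    LaurentPolynomial.C ((3 * (j : ℚ) + (m : ℚ)) * (-2 + 3 * (j : ℚ) + (m : ℚ)) * a) * T j

/-- The operator `D̃_L` on `(ℚ[t,t⁻¹])[[x]]`, determined coefficientwise by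
`D̃_L(t^j x^m) = 4(1−j+m)(3j+m)·t^j x^{m+1}`. -/
noncomputable def DtL (F : (ℚ[T;T⁻¹])⟦X⟧) : (ℚ[T;T⁻¹])⟦X⟧ :=
  PowerSeries.mk fun m => match m with
    | 0 => 0
    | m + 1 => (PowerSeries.coeff (R := ℚ[T;T⁻¹]) m F).coeff.sum fun j a =>
        LaurentPolynomial.C (4 * (1 - (j : ℚ) + (m : ℚ)) * (3 * (j : ℚ) + (m : ℚ)) * a) * T j

/-- The operator `D̃_R` on `(ℚ[t,t⁻¹])[[x]]`, determined coefficientwise by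
`D̃_R(t^j x^m) = (2−3j+m)(−3j+m)·t^{j+1} x^m`. -/
noncomputable def DtR (F : (ℚ[T;T⁻¹])⟦X⟧) : (ℚ[T;T⁻¹])⟦X⟧ :=
  PowerSeries.mk fun m => (PowerSeries.coeff (R := ℚ[T;T⁻¹]) m F).coeff.sum fun j a =>
    LaurentPolynomial.C ((2 - 3 * (j : ℚ) + (m : ℚ)) * (-3 * (j : ℚ) + (m : ℚ)) * a)
      * T (j + 1)

lemma key (c : ℤ → ℚ) (f : ℚ[T;T⁻¹])
    (h : (f.coeff.sum fun j a => LaurentPolynomial.C (c j * a) * T j) = 0) (k : ℤ) :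
    c k * f.coeff k = 0 := by
  have h2 : (f.coeff.sum fun j a => AddMonoidAlgebra.single j (c j * a)) = (0 : ℚ[T;T⁻¹]) := by
    simpa only [single_eq_C_mul_T] using h
  have h3 := congrArg (fun p : ℚ[T;T⁻¹] => p.coeff k) h2
  simp only [AddMonoidAlgebra.coeff_finsuppSum, AddMonoidAlgebra.coeff_single, AddMonoidAlgebra.coeff_zero, Finsupp.coe_zero, Pi.zero_apply] at h3
  rw [Finsupp.sum_apply] at h3
  simp only [Finsupp.single_apply, Finsupp.sum_ite_eq'] at h3
  by_cases hk : k ∈ f.coeff.support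
  · simpa [hk] using h3
  · simp [Finsupp.notMem_support_iff.mp hk]

lemma key' (c : ℤ → ℚ) (f : ℚ[T;T⁻¹])
    (h : (f.coeff.sum fun j a => LaurentPolynomial.C (c j * a) * T (j + 1)) = 0) (k : ℤ) :
    c k * f.coeff k = 0 := by
  have h2 : (f.coeff.sum fun j a => AddMonoidAlgebra.single (j + 1) (c j * a)) = (0 : ℚ[T;T⁻¹]) := by
    simpa only [single_eq_C_mul_T] using h
  have h3 := congrArg (fun p : ℚ[T;T⁻¹] => p.coeff (k + 1)) h2
  simp only [AddMonoidAlgebra.coeff_finsuppSum, AddMonoidAlgebra.coeff_single, AddMonoidAlgebra.coeff_zero, Finsupp.coe_zero, Pi.zero_apply] at h3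
  rw [Finsupp.sum_apply] at h3
  simp only [Finsupp.single_apply, add_left_inj, Finsupp.sum_ite_eq'] at h3
  by_cases hk : k ∈ f.coeff.support
  · simpa [hk] using h3
  · simp [Finsupp.notMem_support_iff.mp hk]

lemma sub_sum (c : ℤ → ℚ) (d : ℤ) (f g : ℚ[T;T⁻¹])
    (h : (f.coeff.sum fun j a => LaurentPolynomial.C (c j * a) * T (j + d))
       = (g.coeff.sum fun j a => LaurentPolynomial.C (c j * a) * T (j + d))) :
    ((f - g).coeff.sum fun j a => LaurentPolynomial.C (c j * a) * T (j + d)) = 0 := by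
  rw [AddMonoidAlgebra.coeff_sub, Finsupp.sum_sub_index, h, sub_self]
  intro j a b
  rw [mul_sub, map_sub, sub_mul]

lemma step (F G : (ℚ[T;T⁻¹])⟦X⟧)
    (hF1 : DL F = DR F) (hF2 : DtL F = DtR F)
    (hG1 : DL G = DR G) (hG2 : DtL G = DtR G)
    (n : ℕ) (hn : 1 ≤ n)
    (ih : PowerSeries.coeff (R := ℚ[T;T⁻¹]) n F = PowerSeries.coeff (R := ℚ[T;T⁻¹]) n G) :
    PowerSeries.coeff (R := ℚ[T;T⁻¹]) (n + 1) F = PowerSeries.coeff (R := ℚ[T;T⁻¹]) (n + 1) G := by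
  set f := PowerSeries.coeff (R := ℚ[T;T⁻¹]) (n + 1) F with hf
  set g := PowerSeries.coeff (R := ℚ[T;T⁻¹]) (n + 1) G with hg
  set c1 : ℤ → ℚ := fun j => (3 * (j : ℚ) + ((n + 1 : ℕ) : ℚ)) * (-2 + 3 * (j : ℚ) + ((n + 1 : ℕ) : ℚ)) with hc1
  set c2 : ℤ → ℚ := fun j => (2 - 3 * (j : ℚ) + ((n + 1 : ℕ) : ℚ)) * (-3 * (j : ℚ) + ((n + 1 : ℕ) : ℚ)) with hc2
  have e1F := congrArg (PowerSeries.coeff (R := ℚ[T;T⁻¹]) (n + 1)) hF1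
  have e1G := congrArg (PowerSeries.coeff (R := ℚ[T;T⁻¹]) (n + 1)) hG1
  have e2F := congrArg (PowerSeries.coeff (R := ℚ[T;T⁻¹]) (n + 1)) hF2
  have e2G := congrArg (PowerSeries.coeff (R := ℚ[T;T⁻¹]) (n + 1)) hG2
  simp only [DL, DR, DtL, DtR, PowerSeries.coeff_mk] at e1F e1G e2F e2G
  rw [ih] at e1F e2F
  have E1 : (f.coeff.sum fun j a => LaurentPolynomial.C (c1 j * a) * T j)
          = (g.coeff.sum fun j a => LaurentPolynomial.C (c1 j * a) * T j) := by
    rw [← e1F, ← e1G]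
  have E2 : (f.coeff.sum fun j a => LaurentPolynomial.C (c2 j * a) * T (j + 1))
          = (g.coeff.sum fun j a => LaurentPolynomial.C (c2 j * a) * T (j + 1)) := by
    rw [← e2F, ← e2G]
  have E1' : ((f - g).coeff.sum fun j a => LaurentPolynomial.C (c1 j * a) * T j) = 0 := by
    have := sub_sum c1 0 f g (by simpa using E1)
    simpa using this
  have E2' : ((f - g).coeff.sum fun j a => LaurentPolynomial.C (c2 j * a) * T (j + 1)) = 0 :=
    sub_sum c2 1 f g E2
  have hzero : f - g = 0 := by
    ext k
    have k1 := key c1 (f - g) E1' k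
    have k2 := key' c2 (f - g) E2' k
    by_contra hne
    have h1 : c1 k = 0 := by
      rcases mul_eq_zero.mp k1 with h | h
      · exact h
      · exact absurd h hne
    have h2 : c2 k = 0 := by
      rcases mul_eq_zero.mp k2 with h | h
      · exact h
      · exact absurd h hne
    have hnQ : (1 : ℚ) ≤ (n : ℚ) := by exact_mod_cast hn
    simp only [hc1] at h1
    simp only [hc2] at h2
    push_cast at h1 h2
    rcases mul_eq_zero.mp h1 with a1 | a1 <;> rcases mul_eq_zero.mp h2 with a2 | a2 <;> linarith
  rw [← sub_eq_zero]
  exact_mod_cast hzero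


/-- The two partial differential equations `D_L F = D_R F` and
`D̃_L F = D̃_R F` have at most one common solution `F ∈ (ℚ[t,t⁻¹])[[x]]` with
`F ≡ 1 + tx (mod x²)`. -/
theorem stmt12 (F G : (ℚ[T;T⁻¹])⟦X⟧)
    (hF1 : DL F = DR F) (hF2 : DtL F = DtR F)
    (hF0 : PowerSeries.coeff (R := ℚ[T;T⁻¹]) 0 F = 1)
    (hF1' : PowerSeries.coeff (R := ℚ[T;T⁻¹]) 1 F = T 1)
    (hG1 : DL G = DR G) (hG2 : DtL G = DtR G)
    (hG0 : PowerSeries.coeff (R := ℚ[T;T⁻¹]) 0 G = 1)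
    (hG1' : PowerSeries.coeff (R := ℚ[T;T⁻¹]) 1 G = T 1) :
    F = G := by
  have main : ∀ n : ℕ, PowerSeries.coeff (R := ℚ[T;T⁻¹]) (n + 1) F = PowerSeries.coeff (R := ℚ[T;T⁻¹]) (n + 1) G := by
    intro n
    induction n with
    | zero => rw [hF1', hG1']
    | succ m ih => exact step F G hF1 hF2 hG1 hG2 (m + 1) (Nat.le_add_left 1 m) ih
  ext k
  cases k with
  | zero => rw [hF0, hG0]

  | succ m => rw [main m]
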